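/- Let p > 3 be a prime and let d be an integer. For any integer n with (p−1)/2 < n < p−1, the determinant T_n(d,p) = det[(j²+dk²)^n]_{0≤j,k≤(p−1)/2} satisfies T_n(d,p) ≡ 0 (mod p). -/

import Mathlib

open Finset Matrix

private lemma det_aux_two_rows {K : Type*} [Field K] {ι : Type*} [DecidableEq ι] [Fintype ι]
    (A : Matrix ι ι K) (i₀ i₁ j₀ : ι) (hne : i₀ ≠ i₁)
    (h0 : ∀ j, j ≠ j₀ → A i₀ j = 0) (h1 : ∀ j, j ≠ j₀ → A i₁ j = 0) :
    A.det = 0 := by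
  by_cases hz : A i₁ j₀ = 0
  · apply Matrix.det_eq_zero_of_row_eq_zero i₁
    intro j
    by_cases hj : j = j₀
    · rw [hj]; exact hz
    · exact h1 j hj
  · have hrow : A i₀ = (A i₀ j₀ * (A i₁ j₀)⁻¹) • A i₁ := by
      funext j
      by_cases hj : j = j₀
      · subst hj
        simp only [Pi.smul_apply, smul_eq_mul]
        rw [mul_assoc, inv_mul_cancel₀ hz, mul_one]
      · simp [h0 j hj, h1 j hj]
    calc A.det = (A.updateRow i₀ ((A i₀ j₀ * (A i₁ j₀)⁻¹) • A i₁)).det := by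
          rw [← hrow, Matrix.updateRow_eq_self]
      _ = (A i₀ j₀ * (A i₁ j₀)⁻¹) * (A.updateRow i₀ (A i₁)).det :=
          Matrix.det_updateRow_smul ..
      _ = 0 := by
          rw [Matrix.det_zero_of_row_eq hne, mul_zero]
          rw [Matrix.updateRow_self, Matrix.updateRow_ne (Ne.symm hne)]

/-- For a prime `p > 3`, an integer `d`, and any integer `n` with
`(p−1)/2 < n < p−1`, the determinant `T_n(d,p) = det[(j²+dk²)^n]_{0≤j,k≤(p−1)/2}`
is divisible by `p`. -/
theorem stmt2 (p : ℕ) [Fact p.Prime] (hp : 3 < p) (d : ℤ) (n : ℕ)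
    (hn1 : (p - 1) / 2 < n) (hn2 : n < p - 1) :
    (p : ℤ) ∣ Matrix.det (Matrix.of fun j k : Fin ((p + 1) / 2) =>
      (((j : ℕ) : ℤ) ^ 2 + d * ((k : ℕ) : ℤ) ^ 2) ^ n) := by
  have hpp : p.Prime := Fact.out
  have hp4 : p ≠ 4 := by rintro rfl; norm_num at hpp
  have hodd : p % 2 = 1 := Nat.odd_iff.mp (hpp.odd_of_ne_two (by omega))
  set q : ℕ := (p - 1) / 2 with hqdef
  have hq2 : 2 ≤ q := by omega
  have hp2q : p = 2 * q + 1 := by omega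
  have hN : (p + 1) / 2 = q + 1 := by omega
  have hnq : q < n := hn1
  have hn2q : n < 2 * q := by omega
  set m : ℕ := n - q with hmdef
  -- the reduction function on exponents
  set f : ℕ → ℕ := fun i => if i ≤ q then i else i - q with hfdef
  have hfbound : ∀ i, i ≤ n → f i < (p + 1) / 2 := by
    intro i hi
    simp only [hfdef]
    split <;> omega
  -- squares
  set x : Fin ((p + 1) / 2) → ZMod p := fun j => ((j : ℕ) : ZMod p) ^ 2 with hxdef
  have hxpow : ∀ (j : Fin ((p + 1) / 2)) (i : ℕ), i ≤ n → x j ^ (f i) = x j ^ i := by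
    intro j i hi
    by_cases h : i ≤ q
    · simp only [hfdef, if_pos h]
    · push_neg at h
      simp only [hfdef, if_neg (by omega : ¬ i ≤ q)]
      by_cases hj0 : (j : ℕ) = 0
      · have hx0 : x j = 0 := by simp [hxdef, hj0]
        rw [hx0, zero_pow (by omega), zero_pow (by omega)]
      · have hjne : ((j : ℕ) : ZMod p) ≠ 0 := by
          rw [Ne, ZMod.natCast_eq_zero_iff]
          intro hdvd
          have hlt : (j : ℕ) < p := lt_of_lt_of_le j.isLt (by omega)
          have := Nat.le_of_dvd (Nat.pos_of_ne_zero hj0) hdvd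
          omega
        have hxq : x j ^ q = 1 := by
          have h1 := ZMod.pow_card_sub_one_eq_one hjne
          calc x j ^ q = ((j : ℕ) : ZMod p) ^ (2 * q) := by
                rw [hxdef]; rw [← pow_mul]
            _ = ((j : ℕ) : ZMod p) ^ (p - 1) := by congr 1; omega
            _ = 1 := h1
        have hsplit : i = (i - q) + q := by omega
        conv_rhs => rw [hsplit]
        rw [pow_add, hxq, mul_one]
  -- matrices over ZMod p
  set U : Matrix (Fin ((p + 1) / 2)) (Fin ((p + 1) / 2)) (ZMod p) :=
    Matrix.of (fun j a => x j ^ (a : ℕ)) with hUdef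
  set V : Matrix (Fin ((p + 1) / 2)) (Fin ((p + 1) / 2)) (ZMod p) :=
    Matrix.of (fun b k => x k ^ (b : ℕ)) with hVdef
  set C : Matrix (Fin ((p + 1) / 2)) (Fin ((p + 1) / 2)) (ZMod p) :=
    Matrix.of (fun a b => ∑ i ∈ Finset.range (n + 1),
      if ((a : ℕ) = f i ∧ (b : ℕ) = f (n - i)) then
        ((n.choose i : ZMod p) * (d : ZMod p) ^ (n - i)) else 0) with hCdef
  -- reduce to ZMod p
  rw [← ZMod.intCast_zmod_eq_zero_iff_dvd]
  have hcast : ((Matrix.det (Matrix.of fun j k : Fin ((p + 1) / 2) =>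
      (((j : ℕ) : ℤ) ^ 2 + d * ((k : ℕ) : ℤ) ^ 2) ^ n) : ℤ) : ZMod p)
      = Matrix.det ((Matrix.of fun j k : Fin ((p + 1) / 2) =>
      (((j : ℕ) : ℤ) ^ 2 + d * ((k : ℕ) : ℤ) ^ 2) ^ n).map
        ((Int.castRingHom (ZMod p)) : ℤ → ZMod p)) := by
    exact RingHom.map_det (Int.castRingHom (ZMod p)) _
  rw [hcast]
  -- factorization
  have hfact : (Matrix.of fun j k : Fin ((p + 1) / 2) =>
      (((j : ℕ) : ℤ) ^ 2 + d * ((k : ℕ) : ℤ) ^ 2) ^ n).map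
        ((Int.castRingHom (ZMod p)) : ℤ → ZMod p) = U * (C * V) := by
    ext j k
    have lhs_eq : ((Matrix.of fun j k : Fin ((p + 1) / 2) =>
        (((j : ℕ) : ℤ) ^ 2 + d * ((k : ℕ) : ℤ) ^ 2) ^ n).map
          ((Int.castRingHom (ZMod p)) : ℤ → ZMod p)) j k
        = (x j + (d : ZMod p) * x k) ^ n := by
      simp only [Matrix.map_apply, Matrix.of_apply, eq_intCast, hxdef]
      push_cast
      ring
    rw [lhs_eq, add_pow]
    have rhs_eq : (U * (C * V)) j k
        = ∑ a : Fin ((p + 1) / 2), ∑ b : Fin ((p + 1) / 2), ∑ i ∈ Finset.range (n + 1),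
          (if ((a : ℕ) = f i ∧ (b : ℕ) = f (n - i)) then
            x j ^ (a : ℕ) * (((n.choose i : ZMod p) * (d : ZMod p) ^ (n - i)) * x k ^ (b : ℕ))
          else 0) := by
      rw [Matrix.mul_apply]
      refine Finset.sum_congr rfl fun a _ => ?_
      rw [Matrix.mul_apply, Finset.mul_sum]
      refine Finset.sum_congr rfl fun b _ => ?_
      simp only [hUdef, hVdef, hCdef, Matrix.of_apply, Finset.sum_mul, Finset.mul_sum,
        ite_mul, zero_mul, mul_ite, mul_zero]
    rw [rhs_eq]
    rw [show (∑ a : Fin ((p + 1) / 2), ∑ b : Fin ((p + 1) / 2), ∑ i ∈ Finset.range (n + 1),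
          (if ((a : ℕ) = f i ∧ (b : ℕ) = f (n - i)) then
            x j ^ (a : ℕ) * (((n.choose i : ZMod p) * (d : ZMod p) ^ (n - i)) * x k ^ (b : ℕ))
          else 0))
        = ∑ i ∈ Finset.range (n + 1), ∑ a : Fin ((p + 1) / 2), ∑ b : Fin ((p + 1) / 2),
          (if ((a : ℕ) = f i ∧ (b : ℕ) = f (n - i)) then
            x j ^ (a : ℕ) * (((n.choose i : ZMod p) * (d : ZMod p) ^ (n - i)) * x k ^ (b : ℕ))
          else 0) from
      Eq.trans (Finset.sum_congr rfl fun a _ => Finset.sum_comm) Finset.sum_comm]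
    refine Finset.sum_congr rfl fun i hi => ?_
    have hin : i ≤ n := by simpa using Nat.lt_succ_iff.mp (Finset.mem_range.mp hi)
    have hfi : f i < (p + 1) / 2 := hfbound i hin
    have hfni : f (n - i) < (p + 1) / 2 := hfbound (n - i) (Nat.sub_le n i)
    set a₀ : Fin ((p + 1) / 2) := ⟨f i, hfi⟩ with ha₀
    set b₀ : Fin ((p + 1) / 2) := ⟨f (n - i), hfni⟩ with hb₀
    rw [Finset.sum_eq_single a₀ ?_ ?_]
    · rw [Finset.sum_eq_single b₀ ?_ ?_]
      · rw [if_pos ⟨rfl, rfl⟩]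
        have e1 : x j ^ ((a₀ : ℕ)) = x j ^ i := hxpow j i hin
        have e2 : x k ^ ((b₀ : ℕ)) = x k ^ (n - i) := hxpow k (n - i) (Nat.sub_le n i)
        rw [e1, e2, mul_pow]
        ring
      · intro b _ hb
        rw [if_neg]
        rintro ⟨-, h2⟩
        exact hb (Fin.ext h2)
      · intro h; exact absurd (Finset.mem_univ b₀) h
    · intro a _ ha
      apply Finset.sum_eq_zero
      intro b _
      rw [if_neg]
      rintro ⟨h1, -⟩
      exact ha (Fin.ext h1)
    · intro h; exact absurd (Finset.mem_univ a₀) h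
  rw [hfact, Matrix.det_mul, Matrix.det_mul]
  -- det C = 0
  have hdetC : C.det = 0 := by
    have hmq : m < q := by omega
    refine det_aux_two_rows C ⟨0, by omega⟩ ⟨q, by omega⟩ ⟨m, by omega⟩ ?_ ?_ ?_
    · exact Fin.ne_of_val_ne (show (0:ℕ) ≠ q by omega)
    · intro b hb
      simp only [hCdef, Matrix.of_apply]
      apply Finset.sum_eq_zero
      intro i hi
      have hin : i ≤ n := Nat.lt_succ_iff.mp (Finset.mem_range.mp hi)
      rw [if_neg]
      rintro ⟨h1, h2⟩
      have hfi0 : f i = 0 := h1.symm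
      have hi0 : i = 0 := by
        simp only [hfdef] at hfi0
        by_cases h : i ≤ q
        · simpa [h] using hfi0
        · rw [if_neg h] at hfi0; omega
      subst hi0
      simp only [Nat.sub_zero] at h2
      have : f n = m := by simp only [hfdef, if_neg (by omega : ¬ n ≤ q), hmdef]
      rw [this] at h2
      exact hb (Fin.ext h2)
    · intro b hb
      simp only [hCdef, Matrix.of_apply]
      apply Finset.sum_eq_zero
      intro i hi
      have hin : i ≤ n := Nat.lt_succ_iff.mp (Finset.mem_range.mp hi)
      rw [if_neg]
      rintro ⟨h1, h2⟩
      have hfiq : f i = q := h1.symm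
      have hiq : i = q := by
        simp only [hfdef] at hfiq
        by_cases h : i ≤ q
        · simpa [h] using hfiq
        · rw [if_neg h] at hfiq; omega
      subst hiq
      have : f (n - q) = m := by simp only [hfdef, if_pos (by omega : n - q ≤ q), hmdef]
      rw [this] at h2
      exact hb (Fin.ext h2)
  rw [hdetC, zero_mul, mul_zero]
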